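/- Let $L \ge 2$ be an integer and $s_1 \ge s_2 \ge 0$. The minimum of $\|H\|_{S_{2/L}}^{2/L}$ over matrices $H \in \mathbb{R}^{d\times 2}$ ($d \ge 2$) such that the singular values of $\sigma(H)$ are $\{s_1, s_2\}$ equals $(s_1 + s_2)^{2/L}$, where $\sigma$ is the entrywise ReLU and $\|H\|_{S_p}^p = \sum_i s_i(H)^p$ is the $p$-Schatten pseudo-norm raised to the $p$-th power. -/

import Mathlib

open Matrix BigOperators

noncomputable def frobSq {m n : ℕ} (A : Matrix (Fin m) (Fin n) ℝ) : ℝ :=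
  ∑ i, ∑ j, (A i j)^2

noncomputable def singVals {m n : ℕ} (A : Matrix (Fin m) (Fin n) ℝ) : Fin n → ℝ :=
  fun i => Real.sqrt ((Matrix.posSemidef_conjTranspose_mul_self A).isHermitian.eigenvalues i)

noncomputable def nuclearNorm {m n : ℕ} (A : Matrix (Fin m) (Fin n) ℝ) : ℝ :=
  ∑ i, singVals A i

noncomputable def relu : ℝ → ℝ := fun t => max t 0


noncomputable def schattenPow {d : ℕ} (p : ℝ) (H : Matrix (Fin d) (Fin 2) ℝ) : ℝ :=
  ∑ i, (singVals H i) ^ p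

open scoped NNReal

section AuxLemmas

lemma binet {ι : Type*} [Fintype ι] (a b p q : ι → ℝ) :
    ∑ i, ∑ j, (a i * b j - a j * b i) * (p i * q j - p j * q i)
      = 2*((∑ i, a i * p i) * (∑ i, b i * q i) - (∑ i, a i * q i)*(∑ i, b i * p i)) := by
  have h : ∀ i j : ι, (a i * b j - a j * b i) * (p i * q j - p j * q i)
      = (a i * p i)*(b j * q j) + (a j * p j)*(b i * q i)
        - ((a i * q i)*(b j * p j) + (a j * q j)*(b i * p i)) := by
    intro i j; ring
  simp only [h, Finset.sum_sub_distrib, Finset.sum_add_distrib, ← Finset.sum_mul,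
    ← Finset.mul_sum]
  ring

lemma cs1 {ι : Type*} [Fintype ι] (f g : ι → ℝ) :
    ∑ i, f i * g i ≤ Real.sqrt (∑ i, f i * f i) * Real.sqrt (∑ i, g i * g i) := by
  have h := Finset.sum_mul_sq_le_sq_mul_sq Finset.univ f g
  calc ∑ i, f i * g i ≤ |∑ i, f i * g i| := le_abs_self _
    _ = Real.sqrt ((∑ i, f i * g i)^2) := (Real.sqrt_sq_eq_abs _).symm
    _ ≤ Real.sqrt ((∑ i, f i ^ 2) * (∑ i, g i ^ 2)) := Real.sqrt_le_sqrt h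
    _ = _ := by rw [Real.sqrt_mul (by positivity)]; simp [pow_two]

lemma cs2 {ι : Type*} [Fintype ι] (F G : ι → ι → ℝ) :
    ∑ i, ∑ j, F i j * G i j
      ≤ Real.sqrt (∑ i, ∑ j, F i j * F i j) * Real.sqrt (∑ i, ∑ j, G i j * G i j) := by
  have h := cs1 (fun x : ι × ι => F x.1 x.2) (fun x : ι × ι => G x.1 x.2)
  simpa [Fintype.sum_prod_type] using h

set_option maxHeartbeats 1600000 in
lemma key' {ι : Type*} [Fintype ι] (u v up un vp vn : ι → ℝ)
    (hud : ∀ i, u i = up i - un i) (hvd : ∀ i, v i = vp i - vn i)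
    (hupn : ∀ i, 0 ≤ up i) (hunn : ∀ i, 0 ≤ un i)
    (hvpn : ∀ i, 0 ≤ vp i) (hvnn : ∀ i, 0 ≤ vn i)
    (huo : ∀ i, up i * un i = 0) (hvo : ∀ i, vp i * vn i = 0) :
    (∑ i, up i * up i) + (∑ i, vp i * vp i)
      + 2 * Real.sqrt ((∑ i, up i * up i) * (∑ i, vp i * vp i) - (∑ i, up i * vp i)^2)
    ≤ (∑ i, u i * u i) + (∑ i, v i * v i)
      + 2 * Real.sqrt ((∑ i, u i * u i) * (∑ i, v i * v i) - (∑ i, u i * v i)^2) := by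
  classical
  set A := ∑ i, up i * up i with hA
  set B := ∑ i, vp i * vp i with hB
  set C := ∑ i, up i * vp i with hC
  set β := ∑ i, vn i * up i with hβ
  set γ := ∑ i, un i * vp i with hγ
  have hSu : ∑ i, u i * u i = A + ∑ i, un i * un i := by
    rw [hA, ← Finset.sum_add_distrib]
    refine Finset.sum_congr rfl fun i _ => ?_
    have h := huo i
    rw [hud i]; linear_combination (-2:ℝ) * h
  have hSv : ∑ i, v i * v i = B + ∑ i, vn i * vn i := by
    rw [hB, ← Finset.sum_add_distrib]
    refine Finset.sum_congr rfl fun i _ => ?_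
    have h := hvo i
    rw [hvd i]; linear_combination (-2:ℝ) * h
  set Op : ι → ι → ℝ := fun i j => up i * vp j - up j * vp i with hOp
  set Om : ι → ι → ℝ := fun i j => u i * v j - u j * v i with hOm
  set N := ∑ i, ∑ j, Op i j * Op i j with hNdef
  set M2 := ∑ i, ∑ j, Om i j * Om i j with hM2def
  have hcomm : ∀ f g : ι → ℝ, ∑ i, f i * g i = ∑ i, g i * f i :=
    fun f g => Finset.sum_congr rfl fun i _ => mul_comm _ _
  have hN : N = 2 * (A * B - C^2) := by
    rw [hNdef, hOp, binet up vp up vp, pow_two, hA, hB, hC]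
    rw [hcomm vp up]
  have hM2 : M2 = 2 * ((∑ i, u i * u i) * (∑ i, v i * v i) - (∑ i, u i * v i)^2) := by
    rw [hM2def, hOm, binet u v u v, pow_two]
    rw [hcomm v u]
  have hNnn : 0 ≤ N := by
    rw [hNdef]
    exact Finset.sum_nonneg fun i _ => Finset.sum_nonneg fun j _ => mul_self_nonneg _
  have hM2nn : 0 ≤ M2 := by
    rw [hM2def]
    exact Finset.sum_nonneg fun i _ => Finset.sum_nonneg fun j _ => mul_self_nonneg _
  have s2 : Real.sqrt 2 * Real.sqrt 2 = 2 := Real.mul_self_sqrt (by norm_num)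
  have sqrtN : Real.sqrt 2 * Real.sqrt N = 2 * Real.sqrt (A*B - C^2) := by
    rw [hN, Real.sqrt_mul (by norm_num : (0:ℝ) ≤ 2), ← mul_assoc, s2]
  have sqrtM : Real.sqrt 2 * Real.sqrt M2
      = 2 * Real.sqrt ((∑ i, u i * u i) * (∑ i, v i * v i) - (∑ i, u i * v i)^2) := by
    rw [hM2, Real.sqrt_mul (by norm_num : (0:ℝ) ≤ 2), ← mul_assoc, s2]
  -- inner product of the two "wedges"
  have hIP : ∑ i, ∑ j, Om i j * Op i j = 2 * (A * B - (C - γ) * (C - β)) := by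
    rw [hOm, hOp, binet u v up vp]
    have h1 : ∑ i, u i * up i = A := by
      rw [hA]; refine Finset.sum_congr rfl fun i _ => ?_
      have h := huo i; rw [hud i]; linear_combination -h
    have h2 : ∑ i, v i * vp i = B := by
      rw [hB]; refine Finset.sum_congr rfl fun i _ => ?_
      have h := hvo i; rw [hvd i]; linear_combination -h
    have h3 : ∑ i, u i * vp i = C - γ := by
      rw [hC, hγ, ← Finset.sum_sub_distrib]
      refine Finset.sum_congr rfl fun i _ => ?_
      rw [hud i]; ring
    have h4 : ∑ i, v i * up i = C - β := by
      rw [hC, hβ, ← Finset.sum_sub_distrib]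
      refine Finset.sum_congr rfl fun i _ => ?_
      rw [hvd i]; ring
    rw [h1, h2, h3, h4]
  -- auxiliary vectors P, Q
  set P : ι → ℝ := fun i => if un i = 0 then vn i else 0 with hP
  set Q : ι → ℝ := fun i => if vn i = 0 then un i else 0 with hQ
  have hPn : ∀ i, 0 ≤ P i := by
    intro i; rw [hP]; dsimp only; split
    · exact hvnn i
    · exact le_rfl
  have hQn : ∀ i, 0 ≤ Q i := by
    intro i; rw [hQ]; dsimp only; split
    · exact hunn i
    · exact le_rfl
  have hβP : β = ∑ i, up i * P i := by
    rw [hβ]; refine Finset.sum_congr rfl fun i _ => ?_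
    rw [hP]; dsimp only
    by_cases h : un i = 0
    · simp [h]; ring
    · have hup0 : up i = 0 := by
        have := huo i
        rcases mul_eq_zero.mp this with h1 | h1
        · exact h1
        · exact absurd h1 h
      simp [h, hup0]
  have hγQ : γ = ∑ i, vp i * Q i := by
    rw [hγ]; refine Finset.sum_congr rfl fun i _ => ?_
    rw [hQ]; dsimp only
    by_cases h : vn i = 0
    · simp [h]; ring
    · have hvp0 : vp i = 0 := by
        have := hvo i
        rcases mul_eq_zero.mp this with h1 | h1
        · exact h1
        · exact absurd h1 h
      simp [h, hvp0]
  -- facts used pointwise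
  have hPvp : ∀ i, P i ≠ 0 → vp i = 0 := by
    intro i hne
    rw [hP] at hne; dsimp only at hne
    by_cases h : un i = 0
    · rw [if_pos h] at hne
      rcases mul_eq_zero.mp (hvo i) with h1 | h1
      · exact h1
      · exact absurd h1 hne
    · rw [if_neg h] at hne; exact absurd rfl hne
  have hQup : ∀ i, Q i ≠ 0 → up i = 0 := by
    intro i hne
    rw [hQ] at hne; dsimp only at hne
    by_cases h : vn i = 0
    · rw [if_pos h] at hne
      rcases mul_eq_zero.mp (huo i) with h1 | h1
      · exact h1
      · exact absurd h1 hne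
    · rw [if_neg h] at hne; exact absurd rfl hne
  have hPQ0 : ∀ i, P i * Q i = 0 := by
    intro i
    by_cases h1 : P i = 0
    · rw [h1, zero_mul]
    · by_cases h2 : Q i = 0
      · rw [h2, mul_zero]
      · -- P i ≠ 0 means un i = 0 and P i = vn i ≠ 0; Q i ≠ 0 needs vn i = 0
        exfalso
        have hv : vn i ≠ 0 := by
          rw [hP] at h1; dsimp only at h1
          by_cases h : un i = 0
          · rwa [if_pos h] at h1
          · rw [if_neg h] at h1; exact absurd rfl h1
        rw [hQ] at h2; dsimp only at h2
        rw [if_neg hv] at h2; exact absurd rfl h2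
  -- pointwise bound
  have hpt : ∀ i j, (up i * P i) * (vp j * Q j) ≤ |Op i j| * (P i * Q j) := by
    intro i j
    by_cases h1 : P i = 0
    · simp [h1]
    by_cases h2 : Q j = 0
    · simp [h2]
    have hvpi : vp i = 0 := hPvp i h1
    have hupj : up j = 0 := hQup j h2
    have hOv : Op i j = up i * vp j := by rw [hOp]; dsimp only; rw [hvpi, hupj]; ring
    have : |Op i j| = up i * vp j := by
      rw [hOv, abs_of_nonneg (mul_nonneg (hupn i) (hvpn j))]
    rw [this]
    have : (up i * P i) * (vp j * Q j) = (up i * vp j) * (P i * Q j) := by ring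
    rw [this]
  have hβγ : β * γ ≤ ∑ i, ∑ j, |Op i j| * (P i * Q j) := by
    rw [hβP, hγQ, Finset.sum_mul_sum]
    refine Finset.sum_le_sum fun i _ => Finset.sum_le_sum fun j _ => hpt i j
  have hswap : ∑ i, ∑ j, |Op i j| * (P j * Q i) = ∑ i, ∑ j, |Op i j| * (P i * Q j) := by
    rw [Finset.sum_comm]
    refine Finset.sum_congr rfl fun i _ => Finset.sum_congr rfl fun j _ => ?_
    have : |Op j i| = |Op i j| := by rw [hOp]; dsimp only; exact abs_sub_comm _ _
    rw [this]
  have h2βγ : 2 * (β * γ) ≤ ∑ i, ∑ j, |Op i j| * (P i * Q j + P j * Q i) := by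
    have : ∑ i, ∑ j, |Op i j| * (P i * Q j + P j * Q i)
        = (∑ i, ∑ j, |Op i j| * (P i * Q j)) + (∑ i, ∑ j, |Op i j| * (P j * Q i)) := by
      simp only [mul_add, Finset.sum_add_distrib]
    rw [this, hswap]; linarith [hβγ]
  -- Cauchy-Schwarz on the majorant
  set Sp := ∑ i, P i * P i with hSp
  set Sq := ∑ i, Q i * Q i with hSq
  have hSpnn : 0 ≤ Sp := Finset.sum_nonneg fun i _ => mul_self_nonneg _
  have hSqnn : 0 ≤ Sq := Finset.sum_nonneg fun i _ => mul_self_nonneg _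
  have hm2 : ∑ i, ∑ j, (P i * Q j + P j * Q i) * (P i * Q j + P j * Q i)
      = 2 * (Sp * Sq) := by
    have h : ∀ i j : ι, (P i * Q j + P j * Q i) * (P i * Q j + P j * Q i)
        = (P i * P i)*(Q j * Q j) + ((P j * P j)*(Q i * Q i)
          + 2*((P i * Q i)*(P j * Q j))) := by intro i j; ring
    have e1 : ∑ i, ∑ j, (P i * P i)*(Q j * Q j) = Sp * Sq :=
      (Finset.sum_mul_sum _ _ _ _).symm
    have e2 : ∑ i, ∑ j, (P j * P j)*(Q i * Q i) = Sp * Sq := by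
      rw [Finset.sum_comm]
      exact (Finset.sum_mul_sum _ _ _ _).symm
    have e3 : ∑ i : ι, ∑ j : ι, 2*((P i * Q i)*(P j * Q j)) = 0 :=
      Finset.sum_eq_zero fun i _ => Finset.sum_eq_zero fun j _ => by rw [hPQ0 i]; ring
    simp only [h]
    simp only [Finset.sum_add_distrib]
    rw [e1, e2, e3]
    ring
  have habs2 : ∑ i, ∑ j, |Op i j| * |Op i j| = N := by
    rw [hNdef]
    exact Finset.sum_congr rfl fun i _ => Finset.sum_congr rfl fun j _ => abs_mul_abs_self _
  have hCSm : ∑ i, ∑ j, |Op i j| * (P i * Q j + P j * Q i)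
      ≤ Real.sqrt N * (Real.sqrt 2 * (Real.sqrt Sp * Real.sqrt Sq)) := by
    have h := cs2 (fun i j => |Op i j|) (fun i j => P i * Q j + P j * Q i)
    rw [habs2, hm2] at h
    calc ∑ i, ∑ j, |Op i j| * (P i * Q j + P j * Q i)
        ≤ Real.sqrt N * Real.sqrt (2 * (Sp * Sq)) := h
      _ = Real.sqrt N * (Real.sqrt 2 * (Real.sqrt Sp * Real.sqrt Sq)) := by
          rw [Real.sqrt_mul (by norm_num : (0:ℝ) ≤ 2), Real.sqrt_mul hSpnn]
  -- main estimate
  have hCnn : 0 ≤ C := by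
    rw [hC]; exact Finset.sum_nonneg fun i _ => mul_nonneg (hupn i) (hvpn i)
  have hβnn : 0 ≤ β := by
    rw [hβ]; exact Finset.sum_nonneg fun i _ => mul_nonneg (hvnn i) (hupn i)
  have hγnn : 0 ≤ γ := by
    rw [hγ]; exact Finset.sum_nonneg fun i _ => mul_nonneg (hunn i) (hvpn i)
  have hCS : ∑ i, ∑ j, Om i j * Op i j ≤ Real.sqrt M2 * Real.sqrt N := by
    have h := cs2 Om Op
    rw [← hM2def, ← hNdef] at h
    exact h
  -- √N * (√N - √M2) ≤ √N * (√2 √Sp √Sq)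
  have hstep : Real.sqrt N * Real.sqrt N - Real.sqrt N * Real.sqrt M2
      ≤ Real.sqrt N * (Real.sqrt 2 * (Real.sqrt Sp * Real.sqrt Sq)) := by
    have hNN : Real.sqrt N * Real.sqrt N = N := Real.mul_self_sqrt hNnn
    have e1 : N - (∑ i, ∑ j, Om i j * Op i j) ≤ 2 * (β * γ) := by
      rw [hN, hIP]
      nlinarith [mul_nonneg hCnn hβnn, mul_nonneg hCnn hγnn]
    calc Real.sqrt N * Real.sqrt N - Real.sqrt N * Real.sqrt M2
        = N - Real.sqrt N * Real.sqrt M2 := by rw [hNN]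
      _ ≤ N - (∑ i, ∑ j, Om i j * Op i j) := by
          linarith [hCS]
      _ ≤ 2 * (β * γ) := e1
      _ ≤ ∑ i, ∑ j, |Op i j| * (P i * Q j + P j * Q i) := h2βγ
      _ ≤ Real.sqrt N * (Real.sqrt 2 * (Real.sqrt Sp * Real.sqrt Sq)) := hCSm
  have hSpvn : Sp ≤ ∑ i, vn i * vn i := by
    rw [hSp]
    refine Finset.sum_le_sum fun i _ => ?_
    rw [hP]; dsimp only; split
    · exact le_rfl
    · rw [zero_mul]; exact mul_self_nonneg _
  have hSqun : Sq ≤ ∑ i, un i * un i := by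
    rw [hSq]
    refine Finset.sum_le_sum fun i _ => ?_
    rw [hQ]; dsimp only; split
    · exact le_rfl
    · rw [zero_mul]; exact mul_self_nonneg _
  -- conclude
  have hfinal : Real.sqrt 2 * Real.sqrt N - Real.sqrt 2 * Real.sqrt M2
      ≤ Sp + Sq := by
    rcases eq_or_lt_of_le hNnn with h0 | h0
    · have : Real.sqrt N = 0 := by rw [← h0, Real.sqrt_zero]
      rw [this]
      have hM := Real.sqrt_nonneg M2
      have h2 := Real.sqrt_nonneg 2
      have := mul_nonneg h2 hM
      linarith [hSpnn, hSqnn]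
    · have hsN : 0 < Real.sqrt N := Real.sqrt_pos.mpr h0
      have hdiff : Real.sqrt N - Real.sqrt M2 ≤ Real.sqrt 2 * (Real.sqrt Sp * Real.sqrt Sq) := by
        refine le_of_mul_le_mul_left ?_ hsN
        rw [mul_sub]
        exact hstep
      have hAM : 2 * (Real.sqrt Sp * Real.sqrt Sq) ≤ Sp + Sq := by
        have e1 := Real.sq_sqrt hSpnn
        have e2 := Real.sq_sqrt hSqnn
        have e3 := sq_nonneg (Real.sqrt Sp - Real.sqrt Sq)
        rw [sub_sq, e1, e2] at e3
        linarith
      have h2 : Real.sqrt 2 * (Real.sqrt N - Real.sqrt M2)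
          ≤ Real.sqrt 2 * (Real.sqrt 2 * (Real.sqrt Sp * Real.sqrt Sq)) := by
        have h2nn : (0:ℝ) ≤ Real.sqrt 2 := Real.sqrt_nonneg 2
        exact mul_le_mul_of_nonneg_left hdiff h2nn
      rw [← mul_assoc, s2] at h2
      rw [mul_sub] at h2
      linarith [h2, hAM]
  rw [← sqrtN, ← sqrtM, hSu, hSv]
  linarith [hfinal, hSpvn, hSqun]


lemma sum_eig_eq_trace {n : ℕ} {A : Matrix (Fin n) (Fin n) ℝ} (hA : A.IsHermitian) :
    A.trace = ∑ i, hA.eigenvalues i := by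
  nth_rewrite 1 [hA.spectral_theorem]
  rw [Unitary.conjStarAlgAut_apply, Matrix.trace_mul_comm, ← Matrix.mul_assoc,
    (Matrix.mem_unitaryGroup_iff').mp (hA.eigenvectorUnitary).2, Matrix.one_mul,
    Matrix.trace_diagonal]
  simp

lemma prod_eig_eq_det {n : ℕ} {A : Matrix (Fin n) (Fin n) ℝ} (hA : A.IsHermitian) :
    A.det = ∏ i, hA.eigenvalues i := by
  have := hA.det_eq_prod_eigenvalues
  simpa using this

lemma conjT_real {d n : ℕ} (M : Matrix (Fin d) (Fin n) ℝ) : Mᴴ = Mᵀ := by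
  ext i j; simp [Matrix.conjTranspose_apply]

lemma trace_form {d : ℕ} (M : Matrix (Fin d) (Fin 2) ℝ) :
    (Mᵀ * M).trace = (∑ i, M i 0 * M i 0) + (∑ i, M i 1 * M i 1) := by
  simp [Matrix.trace, Matrix.mul_apply, Fin.sum_univ_two]

lemma det_form {d : ℕ} (M : Matrix (Fin d) (Fin 2) ℝ) :
    (Mᵀ * M).det = (∑ i, M i 0 * M i 0) * (∑ i, M i 1 * M i 1) - (∑ i, M i 0 * M i 1)^2 := by
  rw [Matrix.det_fin_two]
  simp only [Matrix.mul_apply, Matrix.transpose_apply]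
  rw [pow_two]
  congr 1
  congr 1
  exact Finset.sum_congr rfl fun i _ => mul_comm _ _

lemma eig_sum {d : ℕ} (M : Matrix (Fin d) (Fin 2) ℝ) :
    (Matrix.posSemidef_conjTranspose_mul_self M).isHermitian.eigenvalues 0
      + (Matrix.posSemidef_conjTranspose_mul_self M).isHermitian.eigenvalues 1
    = (∑ i, M i 0 * M i 0) + (∑ i, M i 1 * M i 1) := by
  have h := sum_eig_eq_trace (Matrix.posSemidef_conjTranspose_mul_self M).isHermitian
  rw [Fin.sum_univ_two] at h
  rw [← h, conjT_real, trace_form]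

lemma eig_prod {d : ℕ} (M : Matrix (Fin d) (Fin 2) ℝ) :
    (Matrix.posSemidef_conjTranspose_mul_self M).isHermitian.eigenvalues 0
      * (Matrix.posSemidef_conjTranspose_mul_self M).isHermitian.eigenvalues 1
    = (∑ i, M i 0 * M i 0) * (∑ i, M i 1 * M i 1) - (∑ i, M i 0 * M i 1)^2 := by
  have h := prod_eig_eq_det (Matrix.posSemidef_conjTranspose_mul_self M).isHermitian
  rw [Fin.prod_univ_two] at h
  rw [← h, conjT_real, det_form]

lemma rpow_subadd (x y p : ℝ) (hx : 0 ≤ x) (hy : 0 ≤ y) (hp : 0 ≤ p) (hp1 : p ≤ 1) :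
    (x+y)^p ≤ x^p + y^p := by
  have h := NNReal.rpow_add_le_add_rpow (x.toNNReal) (y.toNNReal) hp hp1
  have h2 : ((x.toNNReal + y.toNNReal : ℝ≥0) : ℝ) = x + y := by
    push_cast; rw [Real.coe_toNNReal _ hx, Real.coe_toNNReal _ hy]
  calc (x+y)^p = ((x.toNNReal + y.toNNReal : ℝ≥0) : ℝ)^p := by rw [h2]
    _ = (((x.toNNReal + y.toNNReal)^p : ℝ≥0) : ℝ) := by rw [NNReal.coe_rpow]
    _ ≤ (((x.toNNReal)^p + (y.toNNReal)^p : ℝ≥0) : ℝ) := by exact_mod_cast h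
    _ = x^p + y^p := by
        push_cast [NNReal.coe_rpow]
        rw [Real.coe_toNNReal _ hx, Real.coe_toNNReal _ hy]

lemma sum_pair {d : ℕ} {a b : Fin d} (hab : a ≠ b) (f : Fin d → ℝ)
    (hf : ∀ i, i ≠ a → i ≠ b → f i = 0) : ∑ i, f i = f a + f b := by
  have h : ∀ i, f i = (if i = a then f a else 0) + (if i = b then f b else 0) := by
    intro i
    by_cases h1 : i = a
    · subst h1; simp [hab]
    · by_cases h2 : i = b
      · subst h2; simp [h1]
      · simp [h1, h2, hf i h1 h2]
  rw [Finset.sum_congr rfl (fun i _ => h i), Finset.sum_add_distrib]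
  simp [Finset.sum_ite_eq']

end AuxLemmas

theorem stmt_9 {d : ℕ} (hd : 2 ≤ d) (L : ℕ) (hL : 2 ≤ L)
    (s1 s2 : ℝ) (hs12 : s2 ≤ s1) (hs2 : 0 ≤ s2) :
    IsLeast {v : ℝ | ∃ H : Matrix (Fin d) (Fin 2) ℝ,
        Matrix.trace ((H.map relu)ᵀ * (H.map relu)) = s1 ^ 2 + s2 ^ 2 ∧
        Matrix.det ((H.map relu)ᵀ * (H.map relu)) = s1 ^ 2 * s2 ^ 2 ∧
        v = schattenPow ((2 : ℝ) / L) H}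
      ((s1 + s2) ^ ((2 : ℝ) / L)) := by
  have hs1 : 0 ≤ s1 := le_trans hs2 hs12
  have hss : 0 ≤ s1 + s2 := by linarith
  have hLpos : (0:ℝ) < (L:ℝ) := by exact_mod_cast (by omega : 0 < L)
  have hp0 : (0:ℝ) < (2:ℝ)/L := by positivity
  have hp1 : (2:ℝ)/L ≤ 1 := by
    rw [div_le_one hLpos]; exact_mod_cast hL
  set p : ℝ := (2:ℝ)/L with hp
  constructor
  · -- membership
    set m := Real.sqrt (s1*s2) with hmdef
    have hmnn : 0 ≤ m := Real.sqrt_nonneg _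
    have hm2 : m * m = s1 * s2 := Real.mul_self_sqrt (by positivity)
    have h01 : (0:ℕ) < d := by omega
    set a : Fin d := ⟨0, by omega⟩ with ha
    set b : Fin d := ⟨1, by omega⟩ with hb
    have hab : a ≠ b := by
      intro h; rw [ha, hb] at h; exact absurd (congrArg Fin.val h) (by simp)
    set H : Matrix (Fin d) (Fin 2) ℝ := Matrix.of (fun i j =>
      if i = a then (if j = 0 then s1 else -m)
      else if i = b then (if j = 0 then -m else s2) else 0) with hH
    have hH0 : ∀ i, H i 0 = (if i = a then s1 else if i = b then -m else 0) := by
      intro i; rw [hH]; simp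
    have hH1 : ∀ i, H i 1 = (if i = a then -m else if i = b then s2 else 0) := by
      intro i; rw [hH]; simp
    have Ha0 : H a 0 = s1 := by rw [hH0 a, if_pos rfl]
    have Hb0 : H b 0 = -m := by rw [hH0 b, if_neg (Ne.symm hab), if_pos rfl]
    have Ha1 : H a 1 = -m := by rw [hH1 a, if_pos rfl]
    have Hb1 : H b 1 = s2 := by rw [hH1 b, if_neg (Ne.symm hab), if_pos rfl]
    have c0 : ∀ i, (H.map relu) i 0 = (if i = a then s1 else 0) := by
      intro i
      rw [Matrix.map_apply, hH0]
      by_cases h1 : i = a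
      · simp [h1, relu, max_eq_left hs1]
      · by_cases h2 : i = b
        · simp [h1, h2, relu, Ne.symm hab, max_eq_right (neg_nonpos.mpr hmnn)]
        · simp [h1, h2, relu]
    have c1 : ∀ i, (H.map relu) i 1 = (if i = b then s2 else 0) := by
      intro i
      rw [Matrix.map_apply, hH1]
      by_cases h1 : i = a
      · simp [h1, relu, max_eq_right (neg_nonpos.mpr hmnn), hab]
      · by_cases h2 : i = b
        · simp [h1, h2, relu, Ne.symm hab, max_eq_left hs2]
        · simp [h1, h2, relu]
    have s0 : ∑ i, (H.map relu) i 0 * (H.map relu) i 0 = s1^2 := by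
      rw [sum_pair hab _ (fun i h1 h2 => by rw [c0 i, if_neg h1, mul_zero])]
      rw [c0 a, c0 b, if_pos rfl, if_neg (Ne.symm hab)]
      simp [pow_two]
    have s1' : ∑ i, (H.map relu) i 1 * (H.map relu) i 1 = s2^2 := by
      rw [sum_pair hab _ (fun i h1 h2 => by rw [c1 i, if_neg h2, mul_zero])]
      rw [c1 a, c1 b, if_neg hab, if_pos rfl]
      simp [pow_two]
    have scross : ∑ i, (H.map relu) i 0 * (H.map relu) i 1 = 0 := by
      refine Finset.sum_eq_zero fun i _ => ?_
      rw [c0 i, c1 i]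
      by_cases h1 : i = a
      · have : i ≠ b := by rw [h1]; exact hab
        rw [if_neg this, mul_zero]
      · rw [if_neg h1, zero_mul]
    have su : ∑ i, H i 0 * H i 0 = s1^2 + s1*s2 := by
      rw [sum_pair hab _ (fun i h1 h2 => by rw [hH0 i, if_neg h1, if_neg h2, mul_zero])]
      rw [Ha0, Hb0, ← hm2]; ring
    have sv : ∑ i, H i 1 * H i 1 = s1*s2 + s2^2 := by
      rw [sum_pair hab _ (fun i h1 h2 => by rw [hH1 i, if_neg h1, if_neg h2, mul_zero])]
      rw [Ha1, Hb1, ← hm2]; ring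
    have suv : ∑ i, H i 0 * H i 1 = -(m*(s1+s2)) := by
      rw [sum_pair hab (fun i => H i 0 * H i 1)
        (fun i h1 h2 => by
          show H i 0 * H i 1 = 0
          rw [hH0 i, if_neg h1, if_neg h2, zero_mul])]
      rw [Ha0, Hb0, Ha1, Hb1]
      ring
    refine ⟨H, ?_, ?_, ?_⟩
    · rw [trace_form, s0, s1']
    · rw [det_form, s0, s1', scross]
      ring
    · -- value
      have hE := eig_sum H
      have hEp := eig_prod H
      rw [su, sv] at hE
      rw [su, sv, suv] at hEp
      set E0 := (Matrix.posSemidef_conjTranspose_mul_self H).isHermitian.eigenvalues 0 with hE0d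
      set E1 := (Matrix.posSemidef_conjTranspose_mul_self H).isHermitian.eigenvalues 1 with hE1d
      have hsum2 : E0 + E1 = (s1+s2)^2 := by rw [hE]; ring
      have hprod0 : E0 * E1 = 0 := by
        rw [hEp]
        linear_combination (-(s1+s2)^2) * hm2
      have hsp : schattenPow p H = (Real.sqrt E0)^p + (Real.sqrt E1)^p := by
        rw [schattenPow, Fin.sum_univ_two]
        rw [singVals, singVals]
      rcases mul_eq_zero.mp hprod0 with h0 | h0
      · have h1 : E1 = (s1+s2)^2 := by rw [h0] at hsum2; linarith
        rw [hsp, h0, h1, Real.sqrt_zero, Real.zero_rpow (ne_of_gt hp0), Real.sqrt_sq hss]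
        ring
      · have h1 : E0 = (s1+s2)^2 := by rw [h0] at hsum2; linarith
        rw [hsp, h0, h1, Real.sqrt_zero, Real.zero_rpow (ne_of_gt hp0), Real.sqrt_sq hss]
        ring
  · -- lower bound
    rintro x ⟨H, htr, hdet, rfl⟩
    have e0 : ∀ i, (H.map relu) i 0 = max (H i 0) 0 := by
      intro i; rw [Matrix.map_apply]; rfl
    have e1 : ∀ i, (H.map relu) i 1 = max (H i 1) 0 := by
      intro i; rw [Matrix.map_apply]; rfl
    rw [trace_form] at htr
    rw [det_form] at hdet
    have cup : ∑ i, (H.map relu) i 0 * (H.map relu) i 0 = ∑ i, max (H i 0) 0 * max (H i 0) 0 :=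
      Finset.sum_congr rfl fun i _ => by rw [e0]
    have cvp : ∑ i, (H.map relu) i 1 * (H.map relu) i 1 = ∑ i, max (H i 1) 0 * max (H i 1) 0 :=
      Finset.sum_congr rfl fun i _ => by rw [e1]
    have cuv : ∑ i, (H.map relu) i 0 * (H.map relu) i 1 = ∑ i, max (H i 0) 0 * max (H i 1) 0 :=
      Finset.sum_congr rfl fun i _ => by rw [e0, e1]
    rw [cup, cvp] at htr
    rw [cup, cvp, cuv] at hdet
    have hud : ∀ i, H i 0 = max (H i 0) 0 - max (-(H i 0)) 0 := by
      intro i; rcases le_total 0 (H i 0) with h | h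
      · rw [max_eq_left h, max_eq_right (neg_nonpos.mpr h)]; ring
      · rw [max_eq_right h, max_eq_left (neg_nonneg.mpr h)]; ring
    have hvd : ∀ i, H i 1 = max (H i 1) 0 - max (-(H i 1)) 0 := by
      intro i; rcases le_total 0 (H i 1) with h | h
      · rw [max_eq_left h, max_eq_right (neg_nonpos.mpr h)]; ring
      · rw [max_eq_right h, max_eq_left (neg_nonneg.mpr h)]; ring
    have huo : ∀ i, max (H i 0) 0 * max (-(H i 0)) 0 = 0 := by
      intro i; rcases le_total 0 (H i 0) with h | h
      · rw [max_eq_right (neg_nonpos.mpr h), mul_zero]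
      · rw [max_eq_right h, zero_mul]
    have hvo : ∀ i, max (H i 1) 0 * max (-(H i 1)) 0 = 0 := by
      intro i; rcases le_total 0 (H i 1) with h | h
      · rw [max_eq_right (neg_nonpos.mpr h), mul_zero]
      · rw [max_eq_right h, zero_mul]
    have hkey := key' (fun i => H i 0) (fun i => H i 1)
      (fun i => max (H i 0) 0) (fun i => max (-(H i 0)) 0)
      (fun i => max (H i 1) 0) (fun i => max (-(H i 1)) 0)
      hud hvd
      (fun i => le_max_right _ _) (fun i => le_max_right _ _)
      (fun i => le_max_right _ _) (fun i => le_max_right _ _)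
      huo hvo
    rw [htr, hdet] at hkey
    have hs12sq : Real.sqrt (s1^2*s2^2) = s1*s2 := by
      rw [show s1^2*s2^2 = (s1*s2)^2 by ring, Real.sqrt_sq (mul_nonneg hs1 hs2)]
    rw [hs12sq] at hkey
    -- eigenvalue side
    have hE := eig_sum H
    have hEp := eig_prod H
    set E0 := (Matrix.posSemidef_conjTranspose_mul_self H).isHermitian.eigenvalues 0 with hE0d
    set E1 := (Matrix.posSemidef_conjTranspose_mul_self H).isHermitian.eigenvalues 1 with hE1d
    have hE0nn : 0 ≤ E0 := (Matrix.posSemidef_conjTranspose_mul_self H).eigenvalues_nonneg 0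
    have hE1nn : 0 ≤ E1 := (Matrix.posSemidef_conjTranspose_mul_self H).eigenvalues_nonneg 1
    have hexp : (Real.sqrt E0 + Real.sqrt E1)^2
        = (∑ i, H i 0 * H i 0) + (∑ i, H i 1 * H i 1)
          + 2 * Real.sqrt ((∑ i, H i 0 * H i 0) * (∑ i, H i 1 * H i 1)
              - (∑ i, H i 0 * H i 1)^2) := by
      have hEE : Real.sqrt E0 * Real.sqrt E1 = Real.sqrt (E0*E1) :=
        (Real.sqrt_mul hE0nn E1).symm
      rw [add_sq, Real.sq_sqrt hE0nn, Real.sq_sqrt hE1nn, mul_assoc, hEE, hEp]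
      linarith [hE]
    have hsq : (s1+s2)^2 ≤ (Real.sqrt E0 + Real.sqrt E1)^2 := by
      rw [hexp]
      have he : (s1+s2)^2 = s1^2+s2^2+2*(s1*s2) := by ring
      rw [he]
      linarith [hkey]
    have hle : s1 + s2 ≤ Real.sqrt E0 + Real.sqrt E1 := by
      have h1 : s1 + s2 = Real.sqrt ((s1+s2)^2) := (Real.sqrt_sq hss).symm
      have h2 : Real.sqrt ((s1+s2)^2) ≤ Real.sqrt ((Real.sqrt E0 + Real.sqrt E1)^2) :=
        Real.sqrt_le_sqrt hsq
      have h3 : Real.sqrt ((Real.sqrt E0 + Real.sqrt E1)^2) = Real.sqrt E0 + Real.sqrt E1 :=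
        Real.sqrt_sq (by positivity)
      linarith [h1 ▸ le_of_le_of_eq h2 h3]
    have hsp : schattenPow p H = (Real.sqrt E0)^p + (Real.sqrt E1)^p := by
      rw [schattenPow, Fin.sum_univ_two]
      rw [singVals, singVals]
    rw [hsp]
    calc (s1+s2)^p ≤ (Real.sqrt E0 + Real.sqrt E1)^p :=
          Real.rpow_le_rpow hss hle hp0.le
      _ ≤ (Real.sqrt E0)^p + (Real.sqrt E1)^p :=
          rpow_subadd _ _ _ (Real.sqrt_nonneg _) (Real.sqrt_nonneg _) hp0.le hp1
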